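/- arXiv:1402.6961 — 5 statements merged into one kernel-verified Lean document; each statement's English description precedes it below -/
import Mathlib

section
/- For every positive integer n, the sum over k ≥ 0 of C(n-k, k) · (n/(n-k)) · 2^k equals 2^n + (-1)^n. (Here the sum ranges over k with 0 ≤ k ≤ ⌊n/2⌋, so that n - k > 0 and the binomial coefficient is nonzero, except that for k = 0 the term is 1·2^0·n/n = 1.) -/
open Finset

private def lf (n : ℕ) : ℚ := ∑ k ∈ range (n + 1), ((n - k).choose k : ℚ) * 2 ^ k

private lemma choose_zero_of (n k : ℕ) (h : n < 2 * k) : (n - k).choose k = 0 :=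
  Nat.choose_eq_zero_of_lt (by omega)

private lemma sum_ge (n a b : ℕ) (hab : a ≤ b) (ha : n / 2 < a) :
    ∑ k ∈ range b, ((n - k).choose k : ℚ) * 2 ^ k
      = ∑ k ∈ range a, ((n - k).choose k : ℚ) * 2 ^ k := by
  refine (Finset.sum_subset (by intro x hx; simp at *; omega) ?_).symm
  intro k hk hk2
  simp only [mem_range] at hk hk2
  rw [choose_zero_of n k (by omega)]
  simp

private lemma sum_stable (n a b : ℕ) (ha : n / 2 < a) (hb : n / 2 < b) :
    ∑ k ∈ range b, ((n - k).choose k : ℚ) * 2 ^ k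
      = ∑ k ∈ range a, ((n - k).choose k : ℚ) * 2 ^ k := by
  rcases le_total a b with h | h
  · exact sum_ge n a b h ha
  · exact (sum_ge n b a h hb).symm

private lemma pascal' (n i : ℕ) :
    (n + 1 - i).choose (i + 1) = (n - i).choose (i + 1) + (n - i).choose i := by
  rcases le_or_gt i n with h | h
  · rw [show n + 1 - i = (n - i) + 1 by omega, Nat.choose_succ_succ]
    exact Nat.add_comm _ _
  · have h1 : n + 1 - i = 0 := by omega
    have h2 : n - i = 0 := by omega
    rw [h1, h2, Nat.choose_eq_zero_of_lt (by omega), Nat.choose_eq_zero_of_lt (by omega)]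

private lemma lf_rec (n : ℕ) : lf (n + 2) = lf (n + 1) + 2 * lf n := by
  rw [lf, Finset.sum_range_succ']
  have key : ∀ i ∈ range (n + 2), ((n + 2 - (i + 1)).choose (i + 1) : ℚ) * 2 ^ (i + 1)
      = ((n - i).choose (i + 1) : ℚ) * 2 ^ (i + 1) + 2 * (((n - i).choose i : ℚ) * 2 ^ i) := by
    intro i _
    rw [show n + 2 - (i + 1) = n + 1 - i by omega, pascal']
    push_cast
    ring
  rw [Finset.sum_congr rfl key, Finset.sum_add_distrib, ← Finset.mul_sum]
  have hB : ∑ i ∈ range (n + 2), ((n - i).choose i : ℚ) * 2 ^ i = lf n := by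
    rw [lf]; exact sum_stable n (n + 1) (n + 2) (by omega) (by omega)
  have hext : ∑ i ∈ range (n + 2), ((n - i).choose (i + 1) : ℚ) * 2 ^ (i + 1)
      = ∑ i ∈ range (n + 1), ((n - i).choose (i + 1) : ℚ) * 2 ^ (i + 1) := by
    rw [Finset.sum_range_succ, show n - (n + 1) = 0 by omega,
      Nat.choose_eq_zero_of_lt (by omega)]
    norm_num
  have hA : lf (n + 1) = ∑ i ∈ range (n + 2), ((n - i).choose (i + 1) : ℚ) * 2 ^ (i + 1)
      + ((n + 2 - 0).choose 0 : ℚ) * 2 ^ 0 := by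
    rw [lf, Finset.sum_range_succ', hext]
    symm
    congr 1
    · refine Finset.sum_congr rfl fun i _ => ?_
      rw [show n + 1 - (i + 1) = n - i by omega]
  rw [hB]
  linarith [hA]

private lemma lf_val (n : ℕ) : 3 * lf n = 2 ^ (n + 1) + (-1) ^ n := by
  induction n using Nat.twoStepInduction with
  | zero => norm_num [lf, Finset.sum_range_succ]
  | one => norm_num [lf, Finset.sum_range_succ]
  | more n ih1 ih2 =>
    rw [lf_rec]
    linear_combination ih2 + 2 * ih1

private lemma term_eq (n k : ℕ) (hk : 1 ≤ k) (hkn : 2 * k ≤ n) :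
    (n : ℚ) / ((n - k : ℕ) : ℚ) * ((n - k).choose k) * 2 ^ k
      = (((n - k).choose k : ℚ) + ((n - k - 1).choose (k - 1) : ℚ)) * 2 ^ k := by
  have hm : 1 ≤ n - k := by omega
  have hne : ((n - k : ℕ) : ℚ) ≠ 0 := Nat.cast_ne_zero.mpr (by omega)
  have key : (n - k) * ((n - k - 1).choose (k - 1)) = (n - k).choose k * k := by
    have := Nat.add_one_mul_choose_eq (n - k - 1) (k - 1)
    rwa [show n - k - 1 + 1 = n - k by omega, show k - 1 + 1 = k by omega] at this
  have hq : ((n - k : ℕ) : ℚ) * ((n - k - 1).choose (k - 1) : ℚ)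
      = ((n - k).choose k : ℚ) * k := by exact_mod_cast key
  have hn' : (n : ℚ) = ((n - k : ℕ) : ℚ) + k := by
    exact_mod_cast (Nat.sub_add_cancel (by omega : k ≤ n)).symm
  rw [div_mul_eq_mul_div, div_mul_eq_mul_div, div_eq_iff hne]
  rw [hn']
  linear_combination (-(2 : ℚ) ^ k) * hq

theorem lucas_weight_sum (n : ℕ) (hn : 0 < n) :
    ∑ k ∈ Finset.range (n / 2 + 1),
      (n : ℚ) / ((n - k : ℕ) : ℚ) * ((n - k).choose k) * 2 ^ k
      = 2 ^ n + (-1) ^ n := by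
  match n, hn with
  | 1, _ => norm_num
  | (m + 2), _ =>
    rw [Finset.sum_range_succ']
    have key : ∀ i ∈ range ((m + 2) / 2),
        ((m + 2 : ℕ) : ℚ) / ((m + 2 - (i + 1) : ℕ) : ℚ) * ((m + 2 - (i + 1)).choose (i + 1)) * 2 ^ (i + 1)
        = ((m + 1 - i).choose (i + 1) : ℚ) * 2 ^ (i + 1) + 2 * (((m - i).choose i : ℚ) * 2 ^ i) := by
      intro i hi
      simp only [mem_range] at hi
      rw [term_eq (m + 2) (i + 1) (by omega) (by omega),
        show m + 2 - (i + 1) = m + 1 - i by omega,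
        show m + 1 - i - 1 = m - i by omega, show i + 1 - 1 = i by omega]
      ring
    rw [Finset.sum_congr rfl key, Finset.sum_add_distrib, ← Finset.mul_sum]
    have hB : ∑ i ∈ range ((m + 2) / 2), ((m - i).choose i : ℚ) * 2 ^ i = lf m := by
      rw [lf]
      exact sum_stable m (m + 1) ((m + 2) / 2) (by omega) (by omega)
    have hA : ∑ i ∈ range ((m + 2) / 2), ((m + 1 - i).choose (i + 1) : ℚ) * 2 ^ (i + 1)
        + ((m + 2 : ℕ) : ℚ) / ((m + 2 - 0 : ℕ) : ℚ) * ((m + 2 - 0).choose 0) * 2 ^ 0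
        = lf (m + 2) := by
      rw [lf, sum_stable (m + 2) ((m + 2) / 2 + 1) (m + 3) (by omega) (by omega),
        Finset.sum_range_succ']
      congr 1
      · refine Finset.sum_congr rfl fun i _ => ?_
        rw [show m + 2 - (i + 1) = m + 1 - i by omega]
      · have : ((m + 2 - 0 : ℕ) : ℚ) ≠ 0 := Nat.cast_ne_zero.mpr (by omega)
        field_simp
        rfl
    rw [hB]
    have h1 := lf_val (m + 2)
    have h2 := lf_val m
    linear_combination hA + (1/3 : ℚ) * h1 + (2/3 : ℚ) * h2
end

section
/- Let n ≥ 3 be odd and let V(Λ_n) ⊆ {0,1}^n be the set of binary strings with no two cyclically adjacent 1s. Let L be the set of vectors in {0,1,*}^n obtained as sums of pairwise non-cyclically-adjacent rows of the n×n circulant matrix circ(*,1,0,…,0) (where in the sum, rows have disjoint supports so each coordinate is 0, 1, or *), together with the all-0 vector. Each l ∈ L determines a box K(l) = K_1 × ⋯ × K_n ⊆ {0,1}^n with K_i = {0} if l_i = 0, K_i = {1} if l_i = 1, K_i = {0,1} if l_i = *. Then the boxes {K(l) : l ∈ L} together with {1}^n partition {0,1}^n, and V(Λ_n) is a selector of {K(l)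 : l ∈ L}: every v ∈ V(Λ_n) lies in exactly one box K(l) with l ∈ L, and every such box contains exactly one element of V(Λ_n). -/
/-- The box in `{0,1}^n` determined by the code word obtained by summing
the rows of `circ(*,1,0,…,0)` indexed by `S`: coordinate `i` is `*` if `i ∈ S`,
`1` if `i - 1 ∈ S`, and `0` otherwise. -/
def lucasBox {n : ℕ} (S : Set (ZMod n)) : Set (ZMod n → Bool) :=
  {v | ∀ i : ZMod n, i ∉ S → (v i = true ↔ i - 1 ∈ S)}

namespace LucasAux

variable {n : ℕ}

/-- The recurrence characterization of admissible boxes containing `v`. -/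
def Char (v : ZMod n → Bool) (S : Set (ZMod n)) : Prop :=
  ∀ i : ZMod n, i ∈ S ↔ (v (i + 1) = true ∧ i + 1 ∉ S)

lemma char_iff (v : ZMod n → Bool) (S : Set (ZMod n)) :
    ((∀ i ∈ S, i + 1 ∉ S) ∧ v ∈ lucasBox S) ↔ Char v S := by
  constructor
  · rintro ⟨hAdm, hbox⟩ i
    constructor
    · intro hi
      have h1 : i + 1 ∉ S := hAdm i hi
      have := hbox (i + 1) h1
      simp only [add_sub_cancel_right] at this
      exact ⟨this.mpr hi, h1⟩
    · rintro ⟨hv, h1⟩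
      have := hbox (i + 1) h1
      simp only [add_sub_cancel_right] at this
      exact this.mp hv
  · intro h
    have hAdm : ∀ i ∈ S, i + 1 ∉ S := fun i hi => ((h i).mp hi).2
    refine ⟨hAdm, fun i hi => ?_⟩
    constructor
    · intro hv
      have := (h (i - 1)).mpr
      rw [sub_add_cancel] at this
      exact this ⟨hv, hi⟩
    · intro hi1
      have := (h (i - 1)).mp
      rw [sub_add_cancel] at this
      exact (this hi1).1

variable [NeZero n]

lemma char_unique {v : ZMod n → Bool} {S T : Set (ZMod n)}
    (hS : Char v S) (hT : Char v T) {i0 : ZMod n} (h0 : v i0 = false) :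
    S = T := by
  have key : ∀ k : ℕ, ((i0 - 1 - (k : ZMod n)) ∈ S ↔ (i0 - 1 - (k : ZMod n)) ∈ T) := by
    intro k
    induction k with
    | zero =>
      simp only [Nat.cast_zero, sub_zero]
      rw [hS (i0 - 1), hT (i0 - 1), sub_add_cancel, h0]
      simp
    | succ k ih =>
      have hx : (i0 - 1 - ((k + 1 : ℕ) : ZMod n)) = (i0 - 1 - (k : ZMod n)) - 1 := by
        push_cast; ring
      rw [hx, hS ((i0 - 1 - (k : ZMod n)) - 1), hT ((i0 - 1 - (k : ZMod n)) - 1),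
        sub_add_cancel]
      tauto
  ext j
  have hj : i0 - 1 - (((i0 - 1 - j).val : ℕ) : ZMod n) = j := by
    rw [ZMod.natCast_val, ZMod.cast_id]; ring
  have := key (i0 - 1 - j).val
  rwa [hj] at this

lemma exists_anchor {v : ZMod n → Bool} {i0 : ZMod n} (h0 : v i0 = false) (i : ZMod n) :
    ∃ m : ℕ, 1 ≤ m ∧ v (i + (m : ZMod n)) = false := by
  by_cases h : i0 = i
  · refine ⟨n, NeZero.one_le, ?_⟩
    rw [ZMod.natCast_self, add_zero, ← h, h0]
  · refine ⟨(i0 - i).val, ?_, ?_⟩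
    · have hne : i0 - i ≠ 0 := sub_ne_zero.mpr h
      have : (i0 - i).val ≠ 0 := fun hc => hne ((ZMod.val_eq_zero _).mp hc)
      omega
    · rw [ZMod.natCast_val, ZMod.cast_id]
      have : i + (i0 - i) = i0 := by ring
      rw [this, h0]

lemma char_exists {v : ZMod n → Bool} {i0 : ZMod n} (h0 : v i0 = false) :
    ∃ S : Set (ZMod n), Char v S := by
  classical
  have h : ∀ i : ZMod n, ∃ m : ℕ, 1 ≤ m ∧ v (i + (m : ZMod n)) = false :=
    exists_anchor h0
  set r : ZMod n → ℕ := fun i => Nat.find (h i) with hr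
  have hspec : ∀ i, 1 ≤ r i ∧ v (i + (r i : ZMod n)) = false := fun i => Nat.find_spec (h i)
  have hfalse : ∀ i, v (i + 1) = false → r i = 1 := by
    intro i hv
    have h1 : 1 ≤ 1 ∧ v (i + ((1 : ℕ) : ZMod n)) = false := by
      simpa using hv
    have hle : r i ≤ 1 := Nat.find_le h1
    have := (hspec i).1
    omega
  have htrue : ∀ i, v (i + 1) = true → r i = r (i + 1) + 1 := by
    intro i hv
    rw [hr]
    rw [Nat.find_eq_iff]
    constructor
    · refine ⟨by omega, ?_⟩
      have := (hspec (i + 1)).2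
      have hcast : i + ((r (i + 1) + 1 : ℕ) : ZMod n) = (i + 1) + ((r (i + 1) : ℕ) : ZMod n) := by
        push_cast; ring
      rw [hcast]
      exact this
    · intro m hm
      rintro ⟨hm1, hmv⟩
      have hm' : m < r (i + 1) + 1 := hm
      match m, hm1, hm' with
      | 1, _, _ =>
        simp only [Nat.cast_one] at hmv
        rw [hv] at hmv; exact absurd hmv (by simp)
      | (k + 2), _, hm' =>
        have hk : k + 1 < Nat.find (h (i + 1)) := by
          have : k + 1 < r (i + 1) := by omega
          exact this
        have hcast : i + ((k + 2 : ℕ) : ZMod n) = (i + 1) + ((k + 1 : ℕ) : ZMod n) := by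
          push_cast; ring
        rw [hcast] at hmv
        exact Nat.find_min (h (i + 1)) hk ⟨by omega, hmv⟩
  refine ⟨{i | Even (r i)}, fun i => ?_⟩
  simp only [Set.mem_setOf_eq]
  cases hv : v (i + 1) with
  | false =>
    rw [hfalse i hv]
    simp
  | true =>
    rw [htrue i hv, Nat.even_add_one]
    simp

lemma char_not_allOnes (hodd : Odd n) {v : ZMod n → Bool} {S : Set (ZMod n)}
    (hS : Char v S) (hall : ∀ i, v i = true) : False := by
  have step : ∀ i : ZMod n, i + 1 ∈ S ↔ i ∉ S := by
    intro i
    have := hS i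
    rw [hall (i + 1)] at this
    constructor
    · intro h1 hi
      exact (this.mp hi).2 h1
    · intro hi
      by_contra h1
      exact hi (this.mpr ⟨rfl, h1⟩)
  have key : ∀ k : ℕ, (((k : ℕ) : ZMod n) ∈ S ↔ (Even k ↔ (0 : ZMod n) ∈ S)) := by
    intro k
    induction k with
    | zero => simp
    | succ k ih =>
      have hx : ((k + 1 : ℕ) : ZMod n) = ((k : ℕ) : ZMod n) + 1 := by push_cast; ring
      rw [hx, step ((k : ℕ) : ZMod n), Nat.even_add_one]
      tauto
  have := key n
  rw [ZMod.natCast_self] at this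
  rw [← Nat.not_even_iff_odd] at hodd
  tauto

end LucasAux

theorem lucas_cube_selector (n : ℕ) (hn : 3 ≤ n) (hodd : Odd n) [NeZero n] :
    -- vertices of the Lucas cube Λ_n
    let V : Set (ZMod n → Bool) :=
      {v | ∀ i : ZMod n, ¬(v i = true ∧ v (i + 1) = true)}
    -- admissible index sets: pairwise non-cyclically-adjacent rows (∅ gives the all-0 word)
    let Adm : Set (Set (ZMod n)) := {S | ∀ i ∈ S, i + 1 ∉ S}
    -- the boxes together with {1}^n partition {0,1}^n
    ((∀ v : ZMod n → Bool,
        ((∀ i, v i = true) ∧ ∀ S ∈ Adm, v ∉ lucasBox S) ∨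
        ((¬ ∀ i, v i = true) ∧ ∃! S, S ∈ Adm ∧ v ∈ lucasBox S))
    -- every vertex of Λ_n lies in exactly one box
    ∧ (∀ v ∈ V, ∃! S, S ∈ Adm ∧ v ∈ lucasBox S)
    -- every box contains exactly one vertex of Λ_n
    ∧ (∀ S ∈ Adm, ∃! v, v ∈ V ∧ v ∈ lucasBox S)) := by
  intro V Adm
  classical
  have part1 : ∀ v : ZMod n → Bool,
      ((∀ i, v i = true) ∧ ∀ S ∈ Adm, v ∉ lucasBox S) ∨
      ((¬ ∀ i, v i = true) ∧ ∃! S, S ∈ Adm ∧ v ∈ lucasBox S) := by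
    intro v
    by_cases hall : ∀ i, v i = true
    · left
      refine ⟨hall, fun S hS hbox => ?_⟩
      exact LucasAux.char_not_allOnes hodd ((LucasAux.char_iff v S).mp ⟨hS, hbox⟩) hall
    · right
      refine ⟨hall, ?_⟩
      push_neg at hall
      obtain ⟨i0, h0⟩ := hall
      rw [ne_eq, Bool.not_eq_true] at h0
      obtain ⟨S, hS⟩ := LucasAux.char_exists h0
      exact ⟨S, (LucasAux.char_iff v S).mpr hS,
        fun T hT => LucasAux.char_unique ((LucasAux.char_iff v T).mp hT) hS h0⟩
  refine ⟨part1, ?_, ?_⟩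
  · intro v hv
    rcases part1 v with ⟨hall, _⟩ | ⟨_, h⟩
    · exact absurd ⟨hall 0, hall (0 + 1)⟩ (hv 0)
    · exact h
  · intro S hS
    set v : ZMod n → Bool := fun i => if i - 1 ∈ S then true else false with hv
    have hvt : ∀ i : ZMod n, v i = true ↔ i - 1 ∈ S := by
      intro i; simp [hv]
    have hbox : v ∈ lucasBox S := fun i _ => hvt i
    have hVv : v ∈ V := by
      intro i ⟨h1, h2⟩
      rw [hvt] at h1 h2
      simp only [add_sub_cancel_right] at h2
      exact hS (i - 1) h1 (by rwa [sub_add_cancel])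
    refine ⟨v, ⟨hVv, hbox⟩, ?_⟩
    rintro w ⟨hwV, hwbox⟩
    funext i
    by_cases hi : i ∈ S
    · have h1 : i + 1 ∉ S := hS i hi
      have hw1 : w (i + 1) = true := by
        have := hwbox (i + 1) h1
        simp only [add_sub_cancel_right] at this
        exact this.mpr hi
      have hwi : w i = false := by
        by_contra hc
        rw [Bool.not_eq_false] at hc
        exact hwV i ⟨hc, hw1⟩
      have hvi : v i = false := by
        have hns : i - 1 ∉ S := fun hc => hS (i - 1) hc (by rwa [sub_add_cancel])
        simp [hv, hns]
      rw [hwi, hvi]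
    · have hw := hwbox i hi
      rw [← hvt i] at hw
      cases hwi : w i with
      | true => rw [hwi] at hw; exact (hw.mp rfl).symm
      | false =>
        cases hvi : v i with
        | true => rw [hwi, hvi] at hw; exact absurd (hw.mpr rfl) (by simp)
        | false => rfl
end

section
/- Let n ≥ 3 be odd, let A = circ(1,2,0,…,0), and let U be the set of all sums of pairwise non-cyclically-adjacent rows of A. Then the boxes [0,2)^n ∩ ([0,2)^n + v - 1) for v ∈ U ∪ {(0,…,0), (2,…,2)} form a partition of [0,2)^n, i.e., they are pairwise disjoint and their union is [0,2)^n. -/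
theorem lagarias_shor_partition (n : ℕ) (hn : 3 ≤ n) (hodd : Odd n) [NeZero n] :
    ∀ x : ZMod n → ℝ, (∀ i, x i ∈ Set.Ico (0 : ℝ) 2) →
      ∃! v : ZMod n → ℤ,
        ((∃ S : Finset (ZMod n), (∀ i ∈ S, i + 1 ∉ S) ∧
            v = fun i => if i ∈ S then 1 else if i - 1 ∈ S then 2 else 0)
          ∨ v = fun _ => 2)
        ∧ ∀ i, x i ∈ Set.Ico ((v i : ℝ) - 1) ((v i : ℝ) - 1 + 2) := by
  classical
  intro x hx
  by_cases hall : ∀ i, 1 ≤ x i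
  · -- all coordinates ≥ 1 : unique v is the all-2 vector
    refine ⟨fun _ => 2, ⟨Or.inr rfl, ?_⟩, ?_⟩
    · intro i
      constructor
      · push_cast; linarith [hall i]
      · push_cast; linarith [(hx i).2]
    · rintro v' ⟨hv', hcond⟩
      rcases hv' with ⟨S, hS, rfl⟩ | rfl
      · exfalso
        have halt : ∀ i : ZMod n, i ∈ S ↔ i + 1 ∉ S := by
          intro i
          constructor
          · exact hS i
          · intro h
            by_contra hi
            have hc := (hcond (i + 1)).2
            beta_reduce at hc
            have hpred : (i + 1) - 1 = i := by ring
            rw [if_neg h, hpred, if_neg hi] at hc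
            push_cast at hc
            linarith [hall (i + 1)]
        have key : ∀ j : ℕ, ∀ i : ZMod n, (i ∈ S ↔ ((i + (j : ZMod n) ∈ S) ↔ Even j)) := by
          intro j
          induction j with
          | zero => intro i; simp
          | succ k ih =>
            intro i
            have h1 := ih i
            have h2 := halt (i + (k : ZMod n))
            have hcast : ((k + 1 : ℕ) : ZMod n) = (k : ZMod n) + 1 := by push_cast; ring
            rw [hcast, ← add_assoc, Nat.even_add_one]
            tauto
        have hkey := key n 0
        rw [ZMod.natCast_self] at hkey
        simp only [add_zero, zero_add] at hkey
        have : ¬ Even n := Nat.not_even_iff_odd.2 hodd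
        tauto
      · rfl
  · -- some coordinate < 1
    push_neg at hall
    obtain ⟨i0, hi0⟩ := hall
    have hex : ∀ i : ZMod n, ∃ j : ℕ, 0 < j ∧ ¬ 1 ≤ x (i + (j : ZMod n)) := by
      intro i
      by_cases h : i = i0
      · refine ⟨n, by omega, ?_⟩
        rw [ZMod.natCast_self, add_zero, h]
        exact not_le.2 hi0
      · refine ⟨(i0 - i).val, ?_, ?_⟩
        · apply Nat.pos_of_ne_zero
          intro hz
          apply h
          exact (sub_eq_zero.mp ((ZMod.val_eq_zero (i0 - i)).1 hz)).symm
        · rw [ZMod.natCast_val, ZMod.cast_id]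
          have heq : i + (i0 - i) = i0 := by ring
          rw [heq]
          exact not_le.2 hi0
    set g : ZMod n → ℕ := fun i => Nat.find (hex i) with hgdef
    have hg_pos : ∀ i, 0 < g i := fun i => (Nat.find_spec (hex i)).1
    have hg_not : ∀ i, ¬ 1 ≤ x (i + (g i : ZMod n)) := fun i => (Nat.find_spec (hex i)).2
    have hg_min : ∀ i, ∀ j : ℕ, 0 < j → j < g i → 1 ≤ x (i + (j : ZMod n)) := by
      intro i j hj hlt
      by_contra hc
      exact Nat.find_min (hex i) hlt ⟨hj, hc⟩
    have hone : ∀ i, 2 ≤ g i → 1 ≤ x (i + 1) := by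
      intro i h2
      have := hg_min i 1 one_pos (by omega)
      rwa [Nat.cast_one] at this
    have hsucc : ∀ i, 1 ≤ x (i + 1) → g i = g (i + 1) + 1 := by
      intro i hxi
      have hgi2 : 2 ≤ g i := by
        rcases Nat.lt_or_ge (g i) 2 with h | h
        · exfalso
          have h1 : g i = 1 := by have := hg_pos i; omega
          apply hg_not i
          rw [h1, Nat.cast_one]
          exact hxi
        · exact h
      apply le_antisymm
      · apply Nat.find_le
        refine ⟨by omega, ?_⟩
        have : (i : ZMod n) + ((g (i + 1) + 1 : ℕ) : ZMod n) = (i + 1) + (g (i + 1) : ZMod n) := by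
          push_cast; ring
        rw [this]
        exact hg_not (i + 1)
      · have hle : g (i + 1) ≤ g i - 1 := by
          apply Nat.find_le
          refine ⟨by omega, ?_⟩
          have : (i + 1 : ZMod n) + ((g i - 1 : ℕ) : ZMod n) = i + (g i : ZMod n) := by
            have h1 : ((g i - 1 : ℕ) : ZMod n) + ((1 : ℕ) : ZMod n) = ((g i : ℕ) : ZMod n) := by
              rw [← Nat.cast_add]
              congr 1
              omega
            rw [Nat.cast_one] at h1
            linear_combination h1
          rw [this]
          exact hg_not i
        omega
    set S : Finset (ZMod n) := Finset.univ.filter (fun i => Even (g i)) with hSdef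
    have hmemS : ∀ i, i ∈ S ↔ Even (g i) := by
      intro i; simp [hSdef]
    have hindep : ∀ i ∈ S, i + 1 ∉ S := by
      intro i hi
      rw [hmemS] at hi ⊢
      have h2 : 2 ≤ g i := by
        have := hg_pos i
        rcases hi with ⟨m, hm⟩
        omega
      have := hsucc i (hone i h2)
      intro hev
      rw [this] at hi
      rcases hi with ⟨m, hm⟩; rcases hev with ⟨m', hm'⟩; omega
    have hx2 : ∀ i, i - 1 ∈ S → 1 ≤ x i := by
      intro i hi
      rw [hmemS] at hi
      have h2 : 2 ≤ g (i - 1) := by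
        have := hg_pos (i - 1)
        rcases hi with ⟨m, hm⟩; omega
      have := hone (i - 1) h2
      rwa [sub_add_cancel] at this
    have hx0 : ∀ i, i ∉ S → i - 1 ∉ S → x i < 1 := by
      intro i hi hi1
      by_contra hc
      push_neg at hc
      rw [hmemS] at hi hi1
      apply hi1
      have hxi : 1 ≤ x ((i - 1) + 1) := by rwa [sub_add_cancel]
      have := hsucc (i - 1) hxi
      rw [sub_add_cancel] at this
      rw [this, Nat.even_add_one]
      exact hi
    refine ⟨fun i => if i ∈ S then 1 else if i - 1 ∈ S then 2 else 0,
      ⟨Or.inl ⟨S, hindep, rfl⟩, ?_⟩, ?_⟩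
    · intro i
      beta_reduce
      by_cases h1 : i ∈ S
      · rw [if_pos h1]
        constructor
        · push_cast; linarith [(hx i).1]
        · push_cast; linarith [(hx i).2]
      · by_cases h2 : i - 1 ∈ S
        · rw [if_neg h1, if_pos h2]
          constructor
          · push_cast; linarith [hx2 i h2]
          · push_cast; linarith [(hx i).2]
        · rw [if_neg h1, if_neg h2]
          constructor
          · push_cast; linarith [(hx i).1]
          · push_cast; linarith [hx0 i h1 h2]
    · rintro v' ⟨hv', hcond⟩
      rcases hv' with ⟨S', hS', rfl⟩ | rfl
      · -- show S' = S
        have h2' : ∀ i, i ∉ S' → i - 1 ∈ S' → 1 ≤ x i := by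
          intro i hi hi1
          have hc := (hcond i).1
          beta_reduce at hc
          rw [if_neg hi, if_pos hi1] at hc
          push_cast at hc
          linarith
        have h0' : ∀ i, i ∉ S' → i - 1 ∉ S' → x i < 1 := by
          intro i hi hi1
          have hc := (hcond i).2
          beta_reduce at hc
          rw [if_neg hi, if_neg hi1] at hc
          push_cast at hc
          linarith
        have key : ∀ k : ℕ, ∀ i : ZMod n, g i = k → (i ∈ S' ↔ Even k) := by
          intro k
          induction k with
          | zero => intro i hgi; exact absurd hgi (by have := hg_pos i; omega)
          | succ k ih =>
            intro i hgi
            by_cases hk : k = 0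
            · subst hk
              have hnx : ¬ 1 ≤ x (i + 1) := by
                have := hg_not i
                rwa [hgi, Nat.cast_one] at this
              constructor
              · intro hi
                exfalso
                apply hnx
                apply h2' (i + 1) (hS' i hi)
                have : (i + 1) - 1 = i := by ring
                rwa [this]
              · intro hev
                exact absurd hev (by decide)
            · have hgi2 : 2 ≤ g i := by omega
              have hx1 : 1 ≤ x (i + 1) := hone i hgi2
              have hg1 : g (i + 1) = k := by
                have := hsucc i hx1
                omega
              have hih := ih (i + 1) hg1
              by_cases hek : Even k
              · constructor
                · intro hi
                  exfalso
                  exact (hS' i hi) (hih.2 hek)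
                · intro hev
                  rw [Nat.even_add_one] at hev
                  exact absurd hek hev
              · have hi1 : i + 1 ∉ S' := fun h => hek (hih.1 h)
                constructor
                · intro _
                  rw [Nat.even_add_one]; exact hek
                · intro _
                  by_contra hi
                  apply not_lt.2 hx1
                  apply h0' (i + 1) hi1
                  have : (i + 1) - 1 = i := by ring
                  rwa [this]
        have hSS : S' = S := by
          ext i
          rw [hmemS, key (g i) i rfl]
        rw [hSS]
      · exfalso
        have hc := (hcond i0).1
        push_cast at hc
        linarith
end

section
/- Let n ≥ 3 be odd. For each position i ∈ Z/n and each k with 1 ≤ k ≤ ⌊n/2⌋, the number of k-element subsets S of Z/n with no two cyclically adjacent elements and i ∈ S equals C(n-k-1, k-1), and therefore Σ_{k=1}^{⌊n/2⌋} C(n-k-1, k-1)·2^k = (2^n - 2)/3. -/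
open Finset

private def P (m j : ℕ) : Finset (Finset ℕ) :=
  (Finset.range m).powerset.filter (fun T => T.card = j ∧ ∀ t ∈ T, t + 1 ∉ T)

private lemma mem_P {m j : ℕ} {T : Finset ℕ} :
    T ∈ P m j ↔ T ⊆ Finset.range m ∧ T.card = j ∧ ∀ t ∈ T, t + 1 ∉ T := by
  simp [P, and_assoc]

private lemma P_zero (m : ℕ) : P m 0 = {∅} := by
  ext T
  simp only [mem_P, Finset.mem_singleton, Finset.card_eq_zero]
  constructor
  · rintro ⟨-, h, -⟩; exact h
  · rintro rfl; simp

private lemma card_P : ∀ m j : ℕ, (P m j).card = (m + 1 - j).choose j := by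
  intro m
  induction m using Nat.strong_induction_on with
  | _ m ih =>
  intro j
  match j with
  | 0 => rw [P_zero]; simp
  | (j+1) =>
  match m with
  | 0 =>
    have : P 0 (j+1) = ∅ := by
      ext T
      simp only [mem_P, Finset.notMem_empty, iff_false, not_and]
      intro hT hc
      rw [Finset.range_zero, Finset.subset_empty] at hT
      simp [hT] at hc
    rw [this]
    simp
  | 1 =>
    have : P 1 (j+1) = if j = 0 then {{0}} else ∅ := by
      ext T
      simp only [mem_P]
      have hr : Finset.range 1 = {0} := rfl
      constructor
      · rintro ⟨hT, hc, -⟩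
        rw [hr, Finset.subset_singleton_iff] at hT
        rcases hT with rfl | rfl
        · simp at hc
        · simp at hc
          simp [← hc]
      · intro hT
        split_ifs at hT with hj
        · simp at hT
          subst hT; subst hj
          refine ⟨by simp [hr], by simp, ?_⟩
          intro t ht
          simp at ht
          subst ht
          simp
        · simp at hT
    rw [this]
    split_ifs with hj
    · subst hj; simp
    · rw [show (1 + 1 - (j+1)) = 1 - j from by omega]
      have : (1 - j).choose (j+1) = 0 := Nat.choose_eq_zero_of_lt (by omega)
      simp [this]
  | (m+2) =>
    -- split on whether m+1 ∈ T
    classical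
    have hsplit : (P (m+2) (j+1)).card
        = ((P (m+2) (j+1)).filter (fun T => m+1 ∈ T)).card
          + ((P (m+2) (j+1)).filter (fun T => m+1 ∉ T)).card :=
      (Finset.card_filter_add_card_filter_not _).symm
    have h1 : (P (m+2) (j+1)).filter (fun T => m+1 ∉ T) = P (m+1) (j+1) := by
      ext T
      simp only [Finset.mem_filter, mem_P]
      constructor
      · rintro ⟨⟨hT, hc, ha⟩, hm⟩
        refine ⟨?_, hc, ha⟩
        intro t ht
        have := hT ht
        simp only [Finset.mem_range] at this ⊢
        rcases Nat.lt_or_ge t (m+1) with h | h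
        · exact h
        · exfalso; apply hm; have : t = m+1 := by omega
          rwa [← this]
      · rintro ⟨hT, hc, ha⟩
        refine ⟨⟨?_, hc, ha⟩, ?_⟩
        · exact hT.trans (by intro x; simp; omega)
        · intro hm
          have := hT hm
          simp at this
    have h2 : ((P (m+2) (j+1)).filter (fun T => m+1 ∈ T)).card = (P m j).card := by
      refine Finset.card_bij' (fun T _ => T.erase (m+1)) (fun T _ => insert (m+1) T) ?hi ?hj ?li ?ri
      case hi => -- forward membership
        intro T hT
        simp only [Finset.mem_filter, mem_P] at hT
        obtain ⟨⟨hsub, hc, ha⟩, hm⟩ := hT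
        rw [mem_P]
        refine ⟨?_, ?_, ?_⟩
        · intro t ht
          rw [Finset.mem_erase] at ht
          obtain ⟨hne, htT⟩ := ht
          have h3 := hsub htT
          simp only [Finset.mem_range] at h3 ⊢
          rcases Nat.lt_or_ge t m with h | h
          · exact h
          · exfalso
            have : t = m ∨ t = m + 1 := by omega
            rcases this with rfl | rfl
            · exact ha t htT hm
            · exact hne rfl
        · rw [Finset.card_erase_of_mem hm, hc]; omega
        · intro t ht
          rw [Finset.mem_erase] at ht ⊢
          intro h
          exact ha t ht.2 h.2
      case hj => -- backward membership
        intro T hT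
        rw [mem_P] at hT
        obtain ⟨hsub, hc, ha⟩ := hT
        have hmn : m + 1 ∉ T := fun h => by simpa using Finset.mem_range.mp (hsub h)
        simp only [Finset.mem_filter, mem_P]
        refine ⟨⟨?_, ?_, ?_⟩, by simp⟩
        · intro t ht
          rw [Finset.mem_insert] at ht
          rcases ht with rfl | ht
          · simp
          · have := Finset.mem_range.mp (hsub ht)
            simp only [Finset.mem_range]; omega
        · rw [Finset.card_insert_of_notMem hmn, hc]
        · intro t ht
          rw [Finset.mem_insert] at ht
          rcases ht with rfl | ht
          · intro h
            rw [Finset.mem_insert] at h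
            rcases h with h | h
            · omega
            · have := Finset.mem_range.mp (hsub h); omega
          · intro h
            rw [Finset.mem_insert] at h
            rcases h with h | h
            · have := Finset.mem_range.mp (hsub ht); omega
            · exact ha t ht h
      case li =>
        intro T hT
        simp only [Finset.mem_filter] at hT
        exact Finset.insert_erase hT.2
      case ri =>
        intro T hT
        rw [mem_P] at hT
        have hmn : m + 1 ∉ T := fun h => by simpa using Finset.mem_range.mp (hT.1 h)
        exact Finset.erase_insert hmn
    rw [hsplit, h1, h2, ih (m+1) (by omega) (j+1), ih m (by omega) j]
    rcases Nat.lt_or_ge (m+2) (j+1) with h | h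
    · have e1 : (m + 2 + 1 - (j+1)).choose (j+1) = 0 := Nat.choose_eq_zero_of_lt (by omega)
      have e2 : (m + 1 + 1 - (j+1)).choose (j+1) = 0 := Nat.choose_eq_zero_of_lt (by omega)
      have e3 : (m + 1 - j).choose j = 0 := Nat.choose_eq_zero_of_lt (by omega)
      omega
    · rw [show m + 2 + 1 - (j+1) = (m + 1 - j) + 1 from by omega,
          show m + 1 + 1 - (j + 1) = m + 1 - j from by omega,
          Nat.choose_succ_succ]

private lemma shift_inj' {n : ℕ} [NeZero n] {i : ZMod n} {a b : ℕ}
    (hab : i + (a : ZMod n) = i + (b : ZMod n)) (ha : a < n) (hb : b < n) : a = b := by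
  have h := add_left_cancel hab
  rw [← ZMod.val_cast_of_lt ha, ← ZMod.val_cast_of_lt hb, h]

private lemma cast_inj_of_lt {n a b : ℕ} [NeZero n] (ha : a < n) (hb : b < n)
    (h : (a : ZMod n) = b) : a = b := by
  rw [← ZMod.val_cast_of_lt ha, ← ZMod.val_cast_of_lt hb, h]

private lemma card_cycle (n : ℕ) (hn : 3 ≤ n) [NeZero n] (i : ZMod n) (k : ℕ) (hk1 : 1 ≤ k) :
    (Finset.univ.powerset.filter (fun S : Finset (ZMod n) =>
        S.card = k ∧ (∀ j ∈ S, j + 1 ∉ S) ∧ i ∈ S)).card = (P (n-3) (k-1)).card := by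
  classical
  have memQ : ∀ S : Finset (ZMod n),
      S ∈ Finset.univ.powerset.filter (fun S : Finset (ZMod n) =>
        S.card = k ∧ (∀ j ∈ S, j + 1 ∉ S) ∧ i ∈ S)
      ↔ S.card = k ∧ (∀ j ∈ S, j + 1 ∉ S) ∧ i ∈ S := by
    intro S; simp
  -- valuations of elements of a good S
  have hval : ∀ S : Finset (ZMod n), (∀ j ∈ S, j + 1 ∉ S) → i ∈ S →
      ∀ s ∈ S, s ≠ i → 2 ≤ (s - i).val ∧ (s - i).val ≤ n - 2 := by
    intro S ha hi s hs hsi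
    have hvlt : (s - i).val < n := ZMod.val_lt _
    have h0 : (s - i).val ≠ 0 := by
      intro h
      rw [ZMod.val_eq_zero, sub_eq_zero] at h
      exact hsi h
    have h1 : (s - i).val ≠ 1 := by
      intro h
      have : s - i = ((1 : ℕ) : ZMod n) := by
        rw [← h, ZMod.natCast_rightInverse (s - i)]
      have hsv : s = i + 1 := by
        rw [Nat.cast_one] at this
        rw [← sub_add_cancel s i, this]; ring
      exact ha i hi (hsv ▸ hs)
    have hn1 : (s - i).val ≠ n - 1 := by
      intro h
      have hc : s - i = ((n - 1 : ℕ) : ZMod n) := by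
        rw [← h, ZMod.natCast_rightInverse (s - i)]
      have : s + 1 = i := by
        have hcast : ((n - 1 : ℕ) : ZMod n) = -1 := by
          push_cast [Nat.cast_sub (by omega : 1 ≤ n)]
          simp
        rw [hcast] at hc
        have : s = i - 1 := by linear_combination hc
        rw [this]; ring
      exact ha s hs (this ▸ hi)
    omega
  refine Finset.card_bij' (fun S _ => (S.erase i).image (fun s => (s - i).val - 2))
    (fun T _ => insert i (T.image (fun t => i + ((t + 2 : ℕ) : ZMod n)))) ?hi ?hj ?li ?ri
  case hi =>
    intro S hS
    rw [memQ] at hS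
    obtain ⟨hc, ha, hiS⟩ := hS
    rw [mem_P]
    have hv := hval S ha hiS
    refine ⟨?_, ?_, ?_⟩
    · intro t ht
      simp only [Finset.mem_image, Finset.mem_erase] at ht
      obtain ⟨s, ⟨hsi, hs⟩, rfl⟩ := ht
      have := hv s hs hsi
      simp only [Finset.mem_range]
      omega
    · rw [Finset.card_image_of_injOn, Finset.card_erase_of_mem hiS, hc]
      intro s₁ h₁ s₂ h₂ he
      replace he : (s₁ - i).val - 2 = (s₂ - i).val - 2 := he
      rw [Finset.mem_coe, Finset.mem_erase] at h₁ h₂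
      have hv₁ := hv s₁ h₁.2 h₁.1
      have hv₂ := hv s₂ h₂.2 h₂.1
      have : (s₁ - i).val = (s₂ - i).val := by omega
      have : s₁ - i = s₂ - i := ZMod.val_injective n this
      linear_combination this
    · intro t ht htt
      simp only [Finset.mem_image, Finset.mem_erase] at ht htt
      obtain ⟨s₁, ⟨h₁i, h₁⟩, he₁⟩ := ht
      obtain ⟨s₂, ⟨h₂i, h₂⟩, he₂⟩ := htt
      replace he₁ : (s₁ - i).val - 2 = t := he₁
      replace he₂ : (s₂ - i).val - 2 = t + 1 := he₂
      have hv₁ := hv s₁ h₁ h₁i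
      have hv₂ := hv s₂ h₂ h₂i
      have hvv : (s₂ - i).val = (s₁ - i).val + 1 := by omega
      have hs₂ : s₂ = s₁ + 1 := by
        have : s₂ - i = (((s₁ - i).val + 1 : ℕ) : ZMod n) := by
          rw [← hvv, ZMod.natCast_rightInverse (s₂ - i)]
        rw [Nat.cast_add, Nat.cast_one, ZMod.natCast_rightInverse (s₁ - i)] at this
        linear_combination this
      exact ha s₁ h₁ (hs₂ ▸ h₂)
  case hj =>
    intro T hT
    rw [mem_P] at hT
    obtain ⟨hsub, hc, ha⟩ := hT
    have hlt : ∀ t ∈ T, t < n - 3 := fun t ht => Finset.mem_range.mp (hsub ht)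
    have hvaux : ∀ t ∈ T, ((i + ((t + 2 : ℕ) : ZMod n)) - i).val = t + 2 := by
      intro t ht
      have : (i + ((t + 2 : ℕ) : ZMod n)) - i = ((t + 2 : ℕ) : ZMod n) := by ring
      rw [this, ZMod.val_cast_of_lt (by have := hlt t ht; omega)]
    have hinotmem : i ∉ T.image (fun t => i + ((t + 2 : ℕ) : ZMod n)) := by
      simp only [Finset.mem_image, not_exists]
      rintro t ⟨ht, he⟩
      have h0 : i + ((t + 2 : ℕ) : ZMod n) = i + ((0 : ℕ) : ZMod n) := by
        push_cast
        push_cast at he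
        linear_combination he
      have := shift_inj' h0 (by have := hlt t ht; omega) (by omega)
      omega
    rw [memQ]
    refine ⟨?_, ?_, by simp⟩
    · rw [Finset.card_insert_of_notMem hinotmem,
        Finset.card_image_of_injOn, hc]
      · omega
      · intro t₁ h₁ t₂ h₂ he
        rw [Finset.mem_coe] at h₁ h₂
        have : ((t₁ + 2 : ℕ) : ZMod n) = ((t₂ + 2 : ℕ) : ZMod n) := by linear_combination he
        have := cast_inj_of_lt (n := n) (by have := hlt t₁ h₁; omega)
          (by have := hlt t₂ h₂; omega) this
        omega
    · intro j hj hj1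
      rw [Finset.mem_insert, Finset.mem_image] at hj hj1
      rcases hj with rfl | ⟨t, ht, rfl⟩
      · rcases hj1 with he | ⟨t, ht, he⟩
        · have h1 : j + ((1 : ℕ) : ZMod n) = j + ((0 : ℕ) : ZMod n) := by
            push_cast
            push_cast at he
            linear_combination he
          have := shift_inj' h1 (by omega) (by omega)
          omega
        · have h1 : j + ((t + 2 : ℕ) : ZMod n) = j + ((1 : ℕ) : ZMod n) := by
            push_cast
            push_cast at he
            linear_combination he
          have := shift_inj' h1 (by have := hlt t ht; omega) (by omega)
          omega
      · rcases hj1 with he | ⟨t', ht', he⟩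
        · have h1 : i + ((t + 3 : ℕ) : ZMod n) = i + ((0 : ℕ) : ZMod n) := by
            push_cast
            push_cast at he
            linear_combination he
          have := shift_inj' h1 (by have := hlt t ht; omega) (by omega)
          omega
        · have h1 : i + ((t + 3 : ℕ) : ZMod n) = i + ((t' + 2 : ℕ) : ZMod n) := by
            push_cast
            push_cast at he
            linear_combination -he
          have := shift_inj' h1 (by have := hlt t ht; omega)
            (by have := hlt t' ht'; omega)
          have ht'' : t' = t + 1 := by omega
          exact ha t ht (ht'' ▸ ht')
  case li =>
    intro S hS
    rw [memQ] at hS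
    obtain ⟨hc, ha, hiS⟩ := hS
    have hv := hval S ha hiS
    rw [Finset.image_image]
    have himg : (S.erase i).image ((fun t => i + ((t + 2 : ℕ) : ZMod n)) ∘ (fun s => (s - i).val - 2))
        = S.erase i := by
      have : ∀ s ∈ S.erase i,
          ((fun t => i + ((t + 2 : ℕ) : ZMod n)) ∘ (fun s => (s - i).val - 2)) s = id s := by
        intro s hs
        rw [Finset.mem_erase] at hs
        have hv' := hv s hs.2 hs.1
        simp only [Function.comp, id]
        rw [show (s - i).val - 2 + 2 = (s - i).val from by omega,
          ZMod.natCast_rightInverse (s - i)]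
        ring
      rw [Finset.image_congr this, Finset.image_id]
    rw [himg, Finset.insert_erase hiS]
  case ri =>
    intro T hT
    rw [mem_P] at hT
    obtain ⟨hsub, hc, ha⟩ := hT
    have hlt : ∀ t ∈ T, t < n - 3 := fun t ht => Finset.mem_range.mp (hsub ht)
    have hinotmem : i ∉ T.image (fun t => i + ((t + 2 : ℕ) : ZMod n)) := by
      simp only [Finset.mem_image, not_exists]
      rintro t ⟨ht, he⟩
      have h0 : i + ((t + 2 : ℕ) : ZMod n) = i + ((0 : ℕ) : ZMod n) := by
        push_cast
        push_cast at he
        linear_combination he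
      have := shift_inj' h0 (by have := hlt t ht; omega) (by omega)
      omega
    rw [Finset.erase_insert hinotmem, Finset.image_image]
    have : ∀ t ∈ T, ((fun s => (s - i).val - 2) ∘ (fun t => i + ((t + 2 : ℕ) : ZMod n))) t = id t := by
      intro t ht
      simp only [Function.comp, id]
      rw [show i + ((t + 2 : ℕ) : ZMod n) - i = ((t + 2 : ℕ) : ZMod n) from by ring,
        ZMod.val_cast_of_lt (by have := hlt t ht; omega)]
      omega
    rw [Finset.image_congr this, Finset.image_id]


private def G (n : ℕ) : ℕ := ∑ k ∈ Finset.Icc 1 (n/2), (n - k - 1).choose (k - 1) * 2 ^ k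

private lemma G_eq_range (n : ℕ) :
    G n = ∑ j ∈ Finset.range (n/2), (n - j - 2).choose j * 2 ^ (j+1) := by
  rw [G, show Finset.Icc 1 (n/2) = Finset.Ico 1 (n/2+1) by rfl, Finset.sum_Ico_eq_sum_range]
  apply Finset.sum_congr (by congr 1)
  intro j hj
  have h1 : n - (1 + j) - 1 = n - j - 2 := by omega
  have h2 : 1 + j - 1 = j := by omega
  have h3 : 1 + j = j + 1 := by omega
  rw [h1, h2, h3]

private lemma Grec_odd (m : ℕ) : G (2*m+3) = G (2*m+2) + 2 * G (2*m+1) := by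
  have d3 : (2*m+3)/2 = m+1 := by omega
  have d2 : (2*m+2)/2 = m+1 := by omega
  have d1 : (2*m+1)/2 = m := by omega
  rw [G_eq_range, G_eq_range, G_eq_range, d3, d2, d1]
  rw [Finset.sum_range_succ' (fun j => (2*m+3 - j - 2).choose j * 2 ^ (j+1)),
      Finset.sum_range_succ' (fun j => (2*m+2 - j - 2).choose j * 2 ^ (j+1))]
  have key : ∀ j ∈ Finset.range m,
      (2*m+3 - (j+1) - 2).choose (j+1) * 2 ^ (j+1+1)
      = 2 * ((2*m+1 - j - 2).choose j * 2 ^ (j+1))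
        + (2*m+2 - (j+1) - 2).choose (j+1) * 2 ^ (j+1+1) := by
    intro j hj
    rw [Finset.mem_range] at hj
    have h1 : 2*m+3 - (j+1) - 2 = (2*m - 1 - j) + 1 := by omega
    have h2 : 2*m+1 - j - 2 = 2*m - 1 - j := by omega
    have h3 : 2*m+2 - (j+1) - 2 = 2*m - 1 - j := by omega
    rw [h1, h2, h3, Nat.choose_succ_succ]
    ring
  rw [Finset.sum_congr rfl key, Finset.sum_add_distrib, Finset.mul_sum]
  simp only [Nat.choose_zero_right]
  ring

private lemma Grec_even (m : ℕ) : G (2*m+4) = G (2*m+3) + 2 * G (2*m+2) := by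
  have d4 : (2*m+4)/2 = m+2 := by omega
  have d3 : (2*m+3)/2 = m+1 := by omega
  have d2 : (2*m+2)/2 = m+1 := by omega
  rw [G_eq_range, G_eq_range, G_eq_range, d4, d3, d2]
  rw [Finset.sum_range_succ' (fun j => (2*m+4 - j - 2).choose j * 2 ^ (j+1)),
      Finset.sum_range_succ' (fun j => (2*m+3 - j - 2).choose j * 2 ^ (j+1))]
  have key : ∀ j ∈ Finset.range (m+1),
      (2*m+4 - (j+1) - 2).choose (j+1) * 2 ^ (j+1+1)
      = 2 * ((2*m+2 - j - 2).choose j * 2 ^ (j+1))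
        + (2*m - j).choose (j+1) * 2 ^ (j+1+1) := by
    intro j hj
    rw [Finset.mem_range] at hj
    have h1 : 2*m+4 - (j+1) - 2 = (2*m - j) + 1 := by omega
    have h2 : 2*m+2 - j - 2 = 2*m - j := by omega
    rw [h1, h2, Nat.choose_succ_succ]
    ring
  rw [Finset.sum_congr rfl key, Finset.sum_add_distrib, Finset.mul_sum]
  have top : ∑ j ∈ Finset.range (m+1), (2*m - j).choose (j+1) * 2 ^ (j+1+1)
      = ∑ j ∈ Finset.range m, (2*m+3 - (j+1) - 2).choose (j+1) * 2 ^ (j+1+1) := by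
    rw [Finset.sum_range_succ]
    have hm : (2*m - m).choose (m+1) = 0 := by
      apply Nat.choose_eq_zero_of_lt; omega
    rw [hm]
    simp only [zero_mul, add_zero]
    apply Finset.sum_congr rfl
    intro j hj
    rw [Finset.mem_range] at hj
    congr 2
    omega
  rw [top]
  simp only [Nat.choose_zero_right]
  ring

private lemma G_closed : ∀ m : ℕ, 3 * G (2*m+3) + 2 = 2^(2*m+3) ∧ 3 * G (2*m+4) = 2^(2*m+4) + 2 := by
  intro m
  induction m with
  | zero => constructor <;> decide +kernel
  | succ m ih =>
    obtain ⟨h1, h2⟩ := ih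
    have e5 : 2*(m+1)+3 = 2*m+5 := by ring
    have e6 : 2*(m+1)+4 = 2*m+6 := by ring
    rw [e5, e6]
    have r5 : G (2*m+5) = G (2*m+4) + 2 * G (2*m+3) := Grec_odd (m+1)
    have r6 : G (2*m+6) = G (2*m+5) + 2 * G (2*m+4) := Grec_even (m+1)
    have p4 : (2:ℕ)^(2*m+4) = 2 * 2^(2*m+3) := by ring
    have p5 : (2:ℕ)^(2*m+5) = 2 * 2^(2*m+4) := by ring
    have p6 : (2:ℕ)^(2*m+6) = 2 * 2^(2*m+5) := by ring
    constructor
    · rw [r5]; omega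
    · rw [r6, r5]; omega


theorem card_cyclic_indep_mem_and_sum (n : ℕ) (hn : 3 ≤ n) (hodd : Odd n) [NeZero n] :
    (∀ i : ZMod n, ∀ k : ℕ, 1 ≤ k → k ≤ n / 2 →
      (Finset.univ.powerset.filter (fun S : Finset (ZMod n) =>
          S.card = k ∧ (∀ j ∈ S, j + 1 ∉ S) ∧ i ∈ S)).card
        = (n - k - 1).choose (k - 1))
    ∧ ∑ k ∈ Finset.Icc 1 (n / 2), ((n - k - 1).choose (k - 1) : ℚ) * 2 ^ k
        = (2 ^ n - 2) / 3 := by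
  constructor
  · intro i k hk1 hk2
    rw [card_cycle n hn i k hk1, card_P (n-3) (k-1)]
    congr 1
    omega
  · obtain ⟨m, hm⟩ : ∃ m, n = 2*m+3 := by
      obtain ⟨t, ht⟩ := hodd
      exact ⟨t - 1, by omega⟩
    subst hm
    have hG := (G_closed m).1
    have hsum : (∑ k ∈ Finset.Icc 1 ((2*m+3) / 2), ((2*m+3 - k - 1).choose (k - 1) : ℚ) * 2 ^ k)
        = ((G (2*m+3) : ℕ) : ℚ) := by
      rw [G]
      push_cast
      ring
    rw [hsum]
    have h3 : (3 : ℚ) * (G (2*m+3) : ℚ) + 2 = 2 ^ (2*m+3) := by exact_mod_cast hG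
    rw [eq_div_iff (by norm_num : (3:ℚ) ≠ 0)]
    linarith
end

section
/- For every even integer n ≥ 2: 3·Σ_{k=0}^{n/2} C(n-k, k)·2^k = 2^{n+1} + 1 and 3·Σ_{k=1}^{n/2} C(n-k-1, k-1)·2^k = 2^n + 2. -/
open Finset

private def Saux (n : ℕ) : ℤ := ∑ k ∈ Finset.range (n + 1), ((n - k).choose k : ℤ) * 2 ^ k

private lemma pasc (n j : ℕ) :
    (n + 1 - j).choose (j + 1) = (n - j).choose j + (n - j).choose (j + 1) := by
  rcases le_or_gt j n with h | h
  · obtain ⟨m, rfl⟩ := Nat.exists_eq_add_of_le h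
    have e1 : j + m + 1 - j = m + 1 := by omega
    have e2 : j + m - j = m := by omega
    rw [e1, e2]
    exact Nat.choose_succ_succ m j
  · have h1 : n - j = 0 := by omega
    have h2 : n + 1 - j = 0 := by omega
    rw [h1, h2, Nat.choose_eq_zero_of_lt (by omega), Nat.choose_eq_zero_of_lt (by omega)]

private lemma Srec (n : ℕ) : Saux (n + 2) = Saux (n + 1) + 2 * Saux n := by
  have e2 : Saux (n + 2) = (∑ j ∈ range (n + 2), ((n + 1 - j).choose (j + 1) : ℤ) * 2 ^ (j + 1)) + 1 := by
    rw [Saux, Finset.sum_range_succ']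
    simp [Nat.succ_sub_succ]
  have e1 : Saux (n + 1) = (∑ j ∈ range (n + 1), ((n - j).choose (j + 1) : ℤ) * 2 ^ (j + 1)) + 1 := by
    rw [Saux, Finset.sum_range_succ']
    simp [Nat.succ_sub_succ]
  have hsplit : ∀ j ∈ range (n + 2), ((n + 1 - j).choose (j + 1) : ℤ) * 2 ^ (j + 1)
      = ((n - j).choose j : ℤ) * 2 ^ (j + 1) + ((n - j).choose (j + 1) : ℤ) * 2 ^ (j + 1) := by
    intro j _
    rw [pasc]
    push_cast
    ring
  rw [e2, e1, Finset.sum_congr rfl hsplit, Finset.sum_add_distrib]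
  have hA : ∑ j ∈ range (n + 2), ((n - j).choose j : ℤ) * 2 ^ (j + 1) = 2 * Saux n := by
    rw [Finset.sum_range_succ]
    have hz : n - (n + 1) = 0 := by omega
    rw [hz, Nat.choose_eq_zero_of_lt (by omega)]
    rw [Saux, Finset.mul_sum]
    push_cast
    simp [mul_comm, mul_assoc, pow_succ, mul_left_comm]
  have hB : ∑ j ∈ range (n + 2), ((n - j).choose (j + 1) : ℤ) * 2 ^ (j + 1)
      = ∑ j ∈ range (n + 1), ((n - j).choose (j + 1) : ℤ) * 2 ^ (j + 1) := by
    rw [Finset.sum_range_succ]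
    have hz : n - (n + 1) = 0 := by omega
    rw [hz, Nat.choose_eq_zero_of_lt (by omega)]
    push_cast
    ring
  rw [hA, hB]
  ring

private lemma Sval : ∀ n, 3 * Saux n = 2 ^ (n + 1) + (-1 : ℤ) ^ n := by
  intro n
  induction n using Nat.twoStepInduction with
  | zero => simp [Saux]
  | one => simp [Saux, Finset.sum_range_succ]
  | more n ih1 ih2 =>
    rw [Srec]
    linear_combination ih2 + 2 * ih1

theorem sum_choose_two_pow_even (n : ℕ) (hn : 2 ≤ n) (heven : Even n) :
    (3 : ℤ) * (∑ k ∈ Finset.range (n / 2 + 1), ((n - k).choose k : ℤ) * 2 ^ k)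
        = 2 ^ (n + 1) + 1
    ∧ (3 : ℤ) * (∑ k ∈ Finset.Icc 1 (n / 2), ((n - k - 1).choose (k - 1) : ℤ) * 2 ^ k)
        = 2 ^ n + 2 := by
  obtain ⟨m, rfl⟩ : ∃ m, n = 2 * m + 2 := ⟨(n - 2) / 2, by
    obtain ⟨r, hr⟩ := heven; omega⟩
  constructor
  · have hsum : (∑ k ∈ Finset.range ((2 * m + 2) / 2 + 1), ((2 * m + 2 - k).choose k : ℤ) * 2 ^ k)
        = Saux (2 * m + 2) := by
      rw [Saux]
      apply Finset.sum_subset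
      · apply Finset.range_subset_range.2; omega
      · intro k _ hk2
        simp only [Finset.mem_range, not_lt] at hk2
        rw [Nat.choose_eq_zero_of_lt (by omega)]
        push_cast; ring
    rw [hsum, Sval]
    have : ((-1 : ℤ)) ^ (2 * m + 2) = 1 := by
      rw [pow_add, pow_mul]; norm_num
    rw [this]
  · have hIcc : (∑ k ∈ Finset.Icc 1 ((2 * m + 2) / 2), ((2 * m + 2 - k - 1).choose (k - 1) : ℤ) * 2 ^ k)
        = ∑ i ∈ Finset.range (m + 1), ((2 * m + 2 - (1 + i) - 1).choose (1 + i - 1) : ℤ) * 2 ^ (1 + i) := by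
      have hq : (2 * m + 2) / 2 = m + 1 := by omega
      rw [hq, ← Finset.Ico_add_one_right_eq_Icc, Finset.sum_Ico_eq_sum_range]
      norm_num
    have hterm : ∀ i ∈ Finset.range (m + 1),
        ((2 * m + 2 - (1 + i) - 1).choose (1 + i - 1) : ℤ) * 2 ^ (1 + i)
        = 2 * (((2 * m - i).choose i : ℤ) * 2 ^ i) := by
      intro i _
      have e1 : 2 * m + 2 - (1 + i) - 1 = 2 * m - i := by omega
      have e2 : 1 + i - 1 = i := by omega
      rw [e1, e2, pow_add]
      ring
    have hsum2 : (∑ i ∈ Finset.range (m + 1), ((2 * m - i).choose i : ℤ) * 2 ^ i)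
        = Saux (2 * m) := by
      rw [Saux]
      apply Finset.sum_subset
      · apply Finset.range_subset_range.2; omega
      · intro k _ hk2
        simp only [Finset.mem_range, not_lt] at hk2
        rw [Nat.choose_eq_zero_of_lt (by omega)]
        push_cast; ring
    rw [hIcc, Finset.sum_congr rfl hterm, ← Finset.mul_sum, hsum2]
    have h := Sval (2 * m)
    have hneg : ((-1 : ℤ)) ^ (2 * m) = 1 := by rw [pow_mul]; norm_num
    rw [hneg] at h
    have hp : (2 : ℤ) ^ (2 * m + 2) = 4 * 2 ^ (2 * m) := by rw [pow_add]; ring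
    have hp2 : (2 : ℤ) ^ (2 * m + 1) = 2 * 2 ^ (2 * m) := by rw [pow_add]; ring
    rw [hp]
    rw [hp2] at h
    linarith
end
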